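/- Let r ≥ 1 and n ≥ 0 be integers and let (V,B₁,B₂,I,J) be stable framed ADHM data of type (r,n) over a field K. If ε₃ is an endomorphism of V satisfying [B₁,ε₃] = 0, [B₂,ε₃] = 0, ε₃∘I = 0 and J∘ε₃ = 0, then ε₃ = 0. -/

import Mathlib

open LinearMap

/-- Let `(V, B₁, B₂, I, J)` be stable framed ADHM data of type `(r, n)` over a
field `K`. If `ε₃` is an endomorphism of `V` commuting with `B₁` and `B₂` and satisfying
`ε₃ ∘ I = 0` and `J ∘ ε₃ = 0`, then `ε₃ = 0`. -/
theorem stmt3 (r n : ℕ) (hr : 1 ≤ r) (K : Type*) [Field K]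
    (V : Type*) [AddCommGroup V] [Module K V] [FiniteDimensional K V]
    (hdim : Module.finrank K V = n)
    (B₁ B₂ : V →ₗ[K] V) (I : (Fin r → K) →ₗ[K] V) (J : V →ₗ[K] (Fin r → K))
    (hADHM : B₁ ∘ₗ B₂ - B₂ ∘ₗ B₁ + I ∘ₗ J = 0)
    (hstable : ∀ W : Submodule K V,
        (∀ v ∈ W, B₁ v ∈ W) → (∀ v ∈ W, B₂ v ∈ W) → (∀ x, I x ∈ W) → W = ⊤)
    (ε₃ : V →ₗ[K] V)
    (h1 : B₁ ∘ₗ ε₃ - ε₃ ∘ₗ B₁ = 0)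
    (h2 : B₂ ∘ₗ ε₃ - ε₃ ∘ₗ B₂ = 0)
    (hI : ε₃ ∘ₗ I = 0)
    (hJ : J ∘ₗ ε₃ = 0) :
    ε₃ = 0 := by
  have hker : ker ε₃ = ⊤ := by
    apply hstable
    · intro v hv
      have h := congrArg (fun f => f v) h1
      simp only [LinearMap.sub_apply, comp_apply, LinearMap.zero_apply] at h
      simp only [mem_ker] at hv ⊢
      rw [hv, map_zero, zero_sub, neg_eq_zero] at h
      exact h
    · intro v hv
      have h := congrArg (fun f => f v) h2
      simp only [LinearMap.sub_apply, comp_apply, LinearMap.zero_apply] at h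
      simp only [mem_ker] at hv ⊢
      rw [hv, map_zero, zero_sub, neg_eq_zero] at h
      exact h
    · intro x
      simp only [mem_ker]
      exact congrArg (fun f => f x) hI
  ext v
  have hv : v ∈ ker ε₃ := hker ▸ Submodule.mem_top
  simpa using hv
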